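/- Let 1 ≤ d ≤ n. For every I = [i_1, …, i_d] ∈ I(d,n), ω(Spec(I)) = wt(I) − wt([1,2,…,d]), i.e. Σ_{m ∈ Spec(I)} ω(m) = (ε_{i_1} + … + ε_{i_d}) − (ε_1 + … + ε_d) in ℝ^n. -/

import Mathlib

/-- `I(d,n)`: strictly increasing `d`-tuples with entries in `{1, …, n}`. -/
def Idn (d n : ℕ) : Type :=
  {v : Fin d → ℕ // StrictMono v ∧ ∀ t : Fin d, 1 ≤ v t ∧ v t ≤ n}

/-- Join (componentwise maximum) on `I(d,n)`. -/
def idnJoin {d n : ℕ} (a b : Idn d n) : Idn d n :=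
  ⟨fun t => max (a.val t) (b.val t), by
    constructor
    · intro i j hij
      exact max_lt_max (a.prop.1 hij) (b.prop.1 hij)
    · intro t
      exact ⟨le_max_of_le_left (a.prop.2 t).1,
        max_le (a.prop.2 t).2 (b.prop.2 t).2⟩⟩

/-- Join-irreducible elements of `I(d,n)`. -/
def idnJI {d n : ℕ} (I : Idn d n) : Prop :=
  ∀ a b : Idn d n, I = idnJoin a b → I = a ∨ I = b

/-- The componentwise partial order on `I(d,n)`. -/
def idnLE {d n : ℕ} (a b : Idn d n) : Prop := ∀ r : Fin d, a.val r ≤ b.val r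

/-- The basis vector `ε_i` of `ℝ^n` (coordinates indexed by `1, …, n ∈ ℕ`). -/
def vecEps (i : ℕ) : ℕ → ℝ := fun j => if j = i then 1 else 0

namespace Stmt14Aux

variable {d n : ℕ}

lemma gap_aux {f : Fin d → ℕ} (hf : StrictMono f) (a : Fin d) :
    ∀ k : ℕ, ∀ b : Fin d, (b : ℕ) = (a : ℕ) + k → f a + k ≤ f b := by
  intro k
  induction k with
  | zero =>
    intro b hb
    have : b = a := Fin.ext (by omega)
    simp [this]
  | succ k ih =>
    intro b hb
    have hbd : (a : ℕ) + k < d := by omega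
    have h1 := ih ⟨(a : ℕ) + k, hbd⟩ rfl
    have h2 : f ⟨(a : ℕ) + k, hbd⟩ < f b := hf (by simp [Fin.lt_def]; omega)
    omega

lemma gap {f : Fin d → ℕ} (hf : StrictMono f) {a b : Fin d} (h : (a : ℕ) ≤ (b : ℕ)) :
    f a + ((b : ℕ) - (a : ℕ)) ≤ f b :=
  gap_aux hf a ((b : ℕ) - (a : ℕ)) b (by omega)

lemma le_val (m : Idn d n) (r : Fin d) : (r : ℕ) + 1 ≤ m.val r := by
  have h0 : 0 < d := lt_of_le_of_lt (Nat.zero_le _) r.2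
  have h1 := gap m.2.1 (a := ⟨0, h0⟩) (b := r) (Nat.zero_le _)
  have h2 := (m.2.2 ⟨0, h0⟩).1
  simp at h1
  omega

lemma mono_le (m : Idn d n) {a b : Fin d} (h : (a : ℕ) ≤ (b : ℕ)) :
    m.val a ≤ m.val b := by
  have := gap m.2.1 h
  omega

/-- If an element has prefix `1, …, s` followed by a consecutive run, it is
join-irreducible. -/
lemma ji_of_runForm (m : Idn d n) (s : Fin d)
    (h1 : ∀ r : Fin d, (r : ℕ) < (s : ℕ) → m.val r = (r : ℕ) + 1)
    (h2 : ∀ r : Fin d, (s : ℕ) ≤ (r : ℕ) → m.val r = m.val s + ((r : ℕ) - (s : ℕ))) :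
    idnJI m := by
  have key : ∀ c : Idn d n, (∀ t, c.val t ≤ m.val t) → c.val s = m.val s → m = c := by
    intro c hle hs
    refine Subtype.ext (funext fun t => ?_)
    rcases lt_or_ge (t : ℕ) (s : ℕ) with ht | ht
    · have ha := le_val c t
      have hb := hle t
      have hc := h1 t ht
      omega
    · have hg := gap c.2.1 (a := s) (b := t) ht
      have hb := hle t
      have hc := h2 t ht
      omega
  intro a b hab
  have hval : ∀ t, m.val t = max (a.val t) (b.val t) := fun t =>
    congrFun (congrArg Subtype.val hab) t
  have ha : ∀ t, a.val t ≤ m.val t := fun t => by rw [hval t]; exact le_max_left _ _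
  have hb : ∀ t, b.val t ≤ m.val t := fun t => by rw [hval t]; exact le_max_right _ _
  rcases max_choice (a.val s) (b.val s) with hc | hc
  · exact Or.inl (key a ha (by rw [hval s, hc]))
  · exact Or.inr (key b hb (by rw [hval s, hc]))

/-- A join-irreducible with first break at `s` is a consecutive run from `s` on:
single step version. -/
lemma ji_step (m : Idn d n) (hm : idnJI m) (s : Fin d)
    (hfirst : ∀ r : Fin d, (r : ℕ) < (s : ℕ) → m.val r = (r : ℕ) + 1)
    (hs : m.val s ≠ (s : ℕ) + 1)
    (u : Fin d) (hsu : (s : ℕ) ≤ (u : ℕ)) (hu1 : (u : ℕ) + 1 < d) :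
    m.val ⟨(u : ℕ) + 1, hu1⟩ = m.val u + 1 := by
  by_contra hne
  set u1 : Fin d := ⟨(u : ℕ) + 1, hu1⟩ with hu1def
  have hu1v : (u1 : ℕ) = (u : ℕ) + 1 := rfl
  have hlt : m.val u < m.val u1 := m.2.1 (by simp [Fin.lt_def, hu1v])
  have hgap2 : m.val u + 2 ≤ m.val u1 := by omega
  -- element a: agrees with m up to u, consecutive run after u
  have haval : ∀ r : Fin d, (u : ℕ) + 1 ≤ (r : ℕ) →
      m.val u + ((r : ℕ) - (u : ℕ)) + 1 ≤ m.val r := by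
    intro r hr
    have hg := gap m.2.1 (a := u1) (b := r) (by omega)
    omega
  let a : Idn d n := ⟨fun r => if (r : ℕ) ≤ (u : ℕ) then m.val r
      else m.val u + ((r : ℕ) - (u : ℕ)), by
    constructor
    · intro i j hij
      have hij' : (i : ℕ) < (j : ℕ) := hij
      by_cases hj : (j : ℕ) ≤ (u : ℕ)
      · simp only [if_pos (le_trans (le_of_lt hij') hj), if_pos hj]
        exact m.2.1 hij
      · by_cases hi : (i : ℕ) ≤ (u : ℕ)
        · simp only [if_pos hi, if_neg hj]
          have : m.val i ≤ m.val u := mono_le m hi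
          omega
        · simp only [if_neg hi, if_neg hj]
          omega
    · intro r
      by_cases hr : (r : ℕ) ≤ (u : ℕ)
      · simp only [if_pos hr]
        exact m.2.2 r
      · simp only [if_neg hr]
        have h1 := haval r (by omega)
        have h2 := (m.2.2 r).2
        have h3 := (m.2.2 u).1
        constructor <;> omega⟩
  let b : Idn d n := ⟨fun r => if (r : ℕ) ≤ (u : ℕ) then (r : ℕ) + 1 else m.val r, by
    constructor
    · intro i j hij
      have hij' : (i : ℕ) < (j : ℕ) := hij
      by_cases hj : (j : ℕ) ≤ (u : ℕ)
      · simp only [if_pos (le_trans (le_of_lt hij') hj), if_pos hj]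
        omega
      · by_cases hi : (i : ℕ) ≤ (u : ℕ)
        · simp only [if_pos hi, if_neg hj]
          have h1 : m.val u1 ≤ m.val j := mono_le m (by simp [hu1def]; omega)
          have h2 := le_val m u
          omega
        · simp only [if_neg hi, if_neg hj]
          exact m.2.1 hij
    · intro r
      by_cases hr : (r : ℕ) ≤ (u : ℕ)
      · simp only [if_pos hr]
        have h1 := le_val m r
        have h2 := (m.2.2 r).2
        constructor <;> omega
      · simp only [if_neg hr]
        exact m.2.2 r⟩
  have haval' : ∀ r : Fin d, a.val r =
      if (r : ℕ) ≤ (u : ℕ) then m.val r else m.val u + ((r : ℕ) - (u : ℕ)) := fun r => rfl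
  have hbval : ∀ r : Fin d, b.val r =
      if (r : ℕ) ≤ (u : ℕ) then (r : ℕ) + 1 else m.val r := fun r => rfl
  have hab : m = idnJoin a b := by
    refine Subtype.ext (funext fun r => ?_)
    show m.val r = max (a.val r) (b.val r)
    rw [haval' r, hbval r]
    by_cases hr : (r : ℕ) ≤ (u : ℕ)
    · rw [if_pos hr, if_pos hr]
      have := le_val m r
      omega
    · rw [if_neg hr, if_neg hr]
      have := haval r (by omega)
      omega
  rcases hm a b hab with h | h
  · have heq := congrFun (congrArg Subtype.val h) u1
    rw [haval' u1, if_neg (by omega)] at heq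
    omega
  · have heq := congrFun (congrArg Subtype.val h) s
    rw [hbval s, if_pos hsu] at heq
    exact hs heq

lemma ji_run (m : Idn d n) (hm : idnJI m) (s : Fin d)
    (hfirst : ∀ r : Fin d, (r : ℕ) < (s : ℕ) → m.val r = (r : ℕ) + 1)
    (hs : m.val s ≠ (s : ℕ) + 1) :
    ∀ r : Fin d, (s : ℕ) ≤ (r : ℕ) → m.val r = m.val s + ((r : ℕ) - (s : ℕ)) := by
  have key : ∀ k : ℕ, ∀ r : Fin d, (r : ℕ) = (s : ℕ) + k → m.val r = m.val s + k := by
    intro k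
    induction k with
    | zero =>
      intro r hr
      have : r = s := Fin.ext (by omega)
      simp [this]
    | succ k ih =>
      intro r hr
      have hud : (s : ℕ) + k < d := by omega
      set u : Fin d := ⟨(s : ℕ) + k, hud⟩ with hu
      have h1 := ih u rfl
      have hu1 : (u : ℕ) + 1 < d := by simp [hu]; omega
      have h2 := ji_step m hm s hfirst hs u (by simp [hu]) hu1
      have : r = ⟨(u : ℕ) + 1, hu1⟩ := Fin.ext (by simp [hu]; omega)
      rw [this, h2, h1]
      omega
  intro r hr
  exact key ((r : ℕ) - (s : ℕ)) r (by omega)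

/-- The explicit join-irreducible `I_{s,t}` with `v = t+1`, bounded by `I`. -/
noncomputable def Emap (I : Idn d n) (s : Fin d) (v : ℕ) : Idn d n :=
  if h : (s : ℕ) + 2 ≤ v ∧ v ≤ I.val s then
    ⟨fun r => if (r : ℕ) < (s : ℕ) then (r : ℕ) + 1 else v + ((r : ℕ) - (s : ℕ)), by
      obtain ⟨h1, h2⟩ := h
      constructor
      · intro i j hij
        have hij' : (i : ℕ) < (j : ℕ) := hij
        by_cases hi : (i : ℕ) < (s : ℕ)
        · by_cases hj : (j : ℕ) < (s : ℕ)
          · simp only [if_pos hi, if_pos hj]; omega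
          · simp only [if_pos hi, if_neg hj]; omega
        · simp only [if_neg hi, if_neg (show ¬ (j : ℕ) < (s : ℕ) by omega)]
          omega
      · intro r
        have hn := (I.2.2 r).2
        by_cases hr : (r : ℕ) < (s : ℕ)
        · simp only [if_pos hr]
          have := (I.2.2 s).2
          constructor <;> omega
        · simp only [if_neg hr]
          have := gap I.2.1 (a := s) (b := r) (by omega)
          constructor <;> omega⟩
  else I

lemma Emap_val (I : Idn d n) (s : Fin d) {v : ℕ} (h1 : (s : ℕ) + 2 ≤ v)
    (h2 : v ≤ I.val s) (r : Fin d) :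
    (Emap I s v).val r = if (r : ℕ) < (s : ℕ) then (r : ℕ) + 1
      else v + ((r : ℕ) - (s : ℕ)) := by
  unfold Emap
  exact congrArg (fun x : Idn d n => x.val r) (dif_pos ⟨h1, h2⟩)

lemma Emap_val_s (I : Idn d n) (s : Fin d) {v : ℕ} (h1 : (s : ℕ) + 2 ≤ v)
    (h2 : v ≤ I.val s) : (Emap I s v).val s = v := by
  rw [Emap_val I s h1 h2, if_neg (lt_irrefl _)]
  omega

/-- The part of the spectrum with first break at `s`. -/
noncomputable def part (I : Idn d n) (s : Fin d) : Set (Idn d n) :=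
  Emap I s '' Set.Ico ((s : ℕ) + 2) (I.val s + 1)

noncomputable instance : Finite (Idn d n) := by
  apply Finite.of_injective
    (fun m : Idn d n => fun r : Fin d => (⟨m.val r % (n + 1), Nat.mod_lt _ (Nat.succ_pos n)⟩ :
      Fin (n + 1)))
  intro m m' h
  refine Subtype.ext (funext fun r => ?_)
  have := congrFun h r
  simp only [Fin.mk.injEq] at this
  have h1 := (m.2.2 r).2
  have h2 := (m'.2.2 r).2
  rwa [Nat.mod_eq_of_lt (by omega), Nat.mod_eq_of_lt (by omega)] at this

/-- Telescoping sum. -/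
lemma tele (g : ℕ → ℕ → ℝ) (a : ℕ) :
    ∀ b : ℕ, a ≤ b →
      ∑ v ∈ Finset.Ico (a + 1) (b + 1), (g v - g (v - 1)) = g b - g a := by
  intro b
  induction b with
  | zero =>
    intro h
    have : a = 0 := Nat.le_zero.mp h
    simp [this]
  | succ b ih =>
    intro h
    rcases Nat.lt_or_ge a (b + 1) with h' | h'
    · rw [Finset.sum_Ico_succ_top (by omega), ih (by omega)]
      simp only [Nat.add_sub_cancel]
      abel
    · have : a = b + 1 := by omega
      simp [this]

end Stmt14Aux

open Stmt14Aux in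
/-- for every `I = [i_1, …, i_d] ∈ I(d,n)`,
`ω(Spec I) = wt(I) − wt([1, …, d]) = (ε_{i_1} + … + ε_{i_d}) − (ε_1 + … + ε_d)`,
where `ω` is the map with `ω(I_{0,0}) = 0` and `ω(I_{s,t}) = ε_{t+1} − ε_t`. -/
theorem stmt14 (d n : ℕ) (hd : 1 ≤ d) (hdn : d ≤ n)
    (ω : Idn d n → ℕ → ℝ)
    (hω0 : ∀ m : Idn d n, (∀ r : Fin d, m.val r = (r : ℕ) + 1) → ω m = 0)
    (hω : ∀ m : Idn d n, idnJI m → ∀ s : Fin d,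
      (∀ r : Fin d, (r : ℕ) < (s : ℕ) → m.val r = (r : ℕ) + 1) →
      m.val s ≠ (s : ℕ) + 1 →
      ω m = vecEps (m.val s) - vecEps (m.val s - 1))
    (I : Idn d n) :
    ∑ᶠ m ∈ {x : Idn d n | idnJI x ∧ idnLE x I}, ω m
      = (∑ r : Fin d, vecEps (I.val r)) - ∑ r : Fin d, vecEps ((r : ℕ) + 1) := by
  classical
  have hd0 : 0 < d := hd
  -- The minimum element
  set m0 : Idn d n := ⟨fun r => (r : ℕ) + 1, by
    constructor
    · intro i j hij
      have h1 : (i : ℕ) < (j : ℕ) := hij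
      show (i : ℕ) + 1 < (j : ℕ) + 1
      omega
    · intro r
      have h2 := r.2
      exact ⟨by show 1 ≤ (r : ℕ) + 1; omega, by show (r : ℕ) + 1 ≤ n; omega⟩⟩ with hm0
  -- membership lemmas for parts
  have part_mem : ∀ (s : Fin d) (m : Idn d n), m ∈ part I s →
      ∃ v, (s : ℕ) + 2 ≤ v ∧ v ≤ I.val s ∧ m = Emap I s v := by
    intro s m hm
    obtain ⟨v, hv, rfl⟩ := hm
    simp only [Set.mem_Ico] at hv
    exact ⟨v, hv.1, by omega, rfl⟩
  have part_prefix : ∀ (s : Fin d) (m : Idn d n), m ∈ part I s →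
      (∀ r : Fin d, (r : ℕ) < (s : ℕ) → m.val r = (r : ℕ) + 1) ∧
      ((s : ℕ) + 2 ≤ m.val s) ∧ m.val s ≤ I.val s ∧
      (∀ r : Fin d, (s : ℕ) ≤ (r : ℕ) → m.val r = m.val s + ((r : ℕ) - (s : ℕ))) := by
    intro s m hm
    obtain ⟨v, h1, h2, rfl⟩ := part_mem s m hm
    have hvs := Emap_val_s I s h1 h2
    refine ⟨fun r hr => ?_, by omega, by omega, fun r hr => ?_⟩
    · rw [Emap_val I s h1 h2, if_pos hr]
    · rw [Emap_val I s h1 h2, if_neg (by omega), hvs]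
  -- parts lie in the spectrum
  have part_sub : ∀ s : Fin d, part I s ⊆ {x : Idn d n | idnJI x ∧ idnLE x I} := by
    intro s m hm
    obtain ⟨hpre, hs2, hsI, hrun⟩ := part_prefix s m hm
    refine ⟨ji_of_runForm m s hpre hrun, fun r => ?_⟩
    rcases lt_or_ge (r : ℕ) (s : ℕ) with hr | hr
    · rw [hpre r hr]; exact le_val I r
    · rw [hrun r hr]
      have := gap I.2.1 (a := s) (b := r) hr
      omega
  -- m0 is not in any part
  have m0_notin : ∀ s : Fin d, m0 ∉ part I s := by
    intro s hm
    obtain ⟨_, hs2, _, _⟩ := part_prefix s m0 hm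
    have : m0.val s = (s : ℕ) + 1 := rfl
    omega
  -- The spectrum decomposes
  have hdecomp : {x : Idn d n | idnJI x ∧ idnLE x I} = insert m0 (⋃ s, part I s) := by
    ext m
    constructor
    · rintro ⟨hji, hle⟩
      by_cases hm : m = m0
      · exact Or.inl hm
      · right
        -- there is a first break
        have hne : ∃ r : Fin d, m.val r ≠ (r : ℕ) + 1 := by
          by_contra hc
          push_neg at hc
          exact hm (Subtype.ext (funext fun r => hc r))
        set F : Finset (Fin d) := Finset.univ.filter (fun r => m.val r ≠ (r : ℕ) + 1) with hF
        have hFne : F.Nonempty := by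
          obtain ⟨r, hr⟩ := hne
          exact ⟨r, by simp [hF, hr]⟩
        set s : Fin d := F.min' hFne with hsd
        have hsF : s ∈ F := F.min'_mem hFne
        have hs : m.val s ≠ (s : ℕ) + 1 := by simpa [hF] using hsF
        have hfirst : ∀ r : Fin d, (r : ℕ) < (s : ℕ) → m.val r = (r : ℕ) + 1 := by
          intro r hr
          by_contra hc
          have h1 : s ≤ r := F.min'_le r (by simp [hF, hc])
          have h2 : (s : ℕ) ≤ (r : ℕ) := h1
          omega
        have hrun := ji_run m hji s hfirst hs
        have hs2 : (s : ℕ) + 2 ≤ m.val s := by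
          have := le_val m s
          omega
        have hsI : m.val s ≤ I.val s := hle s
        refine Set.mem_iUnion.mpr ⟨s, m.val s, ⟨hs2, by omega⟩, ?_⟩
        refine (Subtype.ext (funext fun r => ?_)).symm
        rw [Emap_val I s hs2 hsI]
        rcases lt_or_ge (r : ℕ) (s : ℕ) with hr | hr
        · rw [if_pos hr, hfirst r hr]
        · rw [if_neg (by omega), hrun r hr]
    · rintro (rfl | hm)
      · constructor
        · apply ji_of_runForm m0 ⟨0, hd0⟩
          · intro r hr; simp at hr
          · intro r _
            show (r : ℕ) + 1 = 0 + 1 + ((r : ℕ) - 0)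
            omega
        · intro r; exact le_val I r
      · obtain ⟨s, hs⟩ := Set.mem_iUnion.mp hm
        exact part_sub s hs
  -- parts are pairwise disjoint
  have hdisj : Pairwise (Function.onFun Disjoint (part I)) := by
    have key : ∀ s s' : Fin d, (s : ℕ) < (s' : ℕ) → Disjoint (part I s) (part I s') := by
      intro s s' hss
      rw [Set.disjoint_left]
      intro m hm hm'
      obtain ⟨_, hs2, _, _⟩ := part_prefix s m hm
      obtain ⟨hpre', _, _, _⟩ := part_prefix s' m hm'
      have := hpre' s hss
      omega
    intro s s' hss
    rcases Nat.lt_or_ge (s : ℕ) (s' : ℕ) with h | h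
    · exact key s s' h
    · have : (s' : ℕ) < (s : ℕ) := by
        rcases Nat.lt_or_ge (s' : ℕ) (s : ℕ) with h' | h'
        · exact h'
        · exact absurd (Fin.ext (by omega)) hss
      exact (key s' s this).symm
  -- value of ω on elements of part I s
  have hωpart : ∀ (s : Fin d) (v : ℕ), (s : ℕ) + 2 ≤ v → v ≤ I.val s →
      ω (Emap I s v) = vecEps v - vecEps (v - 1) := by
    intro s v h1 h2
    have hmem : Emap I s v ∈ part I s := ⟨v, ⟨h1, by omega⟩, rfl⟩
    obtain ⟨hpre, _, _, hrun⟩ := part_prefix s _ hmem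
    have hvs := Emap_val_s I s h1 h2
    have hji := ji_of_runForm _ s hpre hrun
    rw [hω _ hji s hpre (by omega), hvs]
  -- compute the sum over each part
  have hpartsum : ∀ s : Fin d,
      ∑ᶠ m ∈ part I s, ω m = vecEps (I.val s) - vecEps ((s : ℕ) + 1) := by
    intro s
    have hinj : Set.InjOn (Emap I s) (Set.Ico ((s : ℕ) + 2) (I.val s + 1)) := by
      intro v hv w hw hvw
      simp only [Set.mem_Ico] at hv hw
      have h1 := Emap_val_s I s hv.1 (by omega : v ≤ I.val s)
      have h2 := Emap_val_s I s hw.1 (by omega : w ≤ I.val s)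
      rw [← h1, ← h2, hvw]
    rw [part, finsum_mem_image hinj]
    have : Set.Ico ((s : ℕ) + 2) (I.val s + 1) =
        ↑(Finset.Ico ((s : ℕ) + 2) (I.val s + 1)) := by simp
    rw [this, finsum_mem_coe_finset]
    have hterm : ∀ v ∈ Finset.Ico ((s : ℕ) + 2) (I.val s + 1),
        ω (Emap I s v) = vecEps v - vecEps (v - 1) := by
      intro v hv
      simp only [Finset.mem_Ico] at hv
      exact hωpart s v hv.1 (by omega)
    rw [Finset.sum_congr rfl hterm]
    have hle : (s : ℕ) + 1 ≤ I.val s := le_val I s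
    exact tele vecEps ((s : ℕ) + 1) (I.val s) hle
  -- assemble
  rw [hdecomp]
  rw [finsum_mem_insert ω (by
      intro h
      obtain ⟨s, hs⟩ := Set.mem_iUnion.mp h
      exact m0_notin s hs) (Set.toFinite _)]
  rw [hω0 m0 (fun r => rfl)]
  rw [finsum_mem_iUnion hdisj (fun s => Set.toFinite _)]
  rw [finsum_eq_sum_of_fintype]
  rw [Finset.sum_congr rfl (fun s _ => hpartsum s)]
  rw [Finset.sum_sub_distrib]
  ring
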